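/- arXiv:1703.05968 — 2 statements merged into one kernel-verified Lean document; each statement's English description precedes it below -/
import Mathlib

section
/- Let k be a field and C a small k-linear category, and let Mat(C) be its additive closure (matrix category): objects are finite tuples (x_1, …, x_m) of objects of C and morphisms are matrices of morphisms of C. The k-linear map Tr C → Tr Mat(C) induced by the canonical functor sending x to the one-entry tuple (x) is bijective, and its inverse sends the trace class of an endomorphism matrix (f_{k,l})_{k,l} of (x_1, …, x_m) to the sum Σ_k [f_{k,k}] of the trace classes of its diagonal entries. -/
open CategoryTheory CategoryTheory.Limits

attribute [local instance] Classical.propDecidable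

noncomputable section

universe u

variable (k : Type) [Field k]

section MatLinear

variable {C : Type} [SmallCategory C] [Preadditive C] [CategoryTheory.Linear k C]

instance matHomModule (M N : Mat_ C) : Module k (M ⟶ N) :=
  inferInstanceAs <| Module k <| ∀ (i : M.ι) (j : N.ι), M.X i ⟶ N.X j

@[simp] lemma mat_smul_apply {M N : Mat_ C} (c : k) (f : M ⟶ N) (i : M.ι) (j : N.ι) :
    (c • f) i j = c • f i j := rfl

instance matLinear : CategoryTheory.Linear k (Mat_ C) where
  homModule M N := matHomModule k M N
  smul_comp M N K c f g := by
    ext i j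
    simp [Mat_.comp_apply, Finset.smul_sum, CategoryTheory.Linear.smul_comp]
  comp_smul M N K f c g := by
    ext i j
    simp [Mat_.comp_apply, Finset.smul_sum, CategoryTheory.Linear.comp_smul]

end MatLinear

open scoped DirectSum

/-- The subspace of `⊕_{x} End(x)` spanned by the commutators `f ∘ g − g ∘ f`. -/
def traceRel (C : Type u) [Category.{0} C] [Preadditive C] [CategoryTheory.Linear k C] :
    Submodule k (⨁ x : C, (x ⟶ x)) :=
  Submodule.span k
    {u | ∃ (x y : C) (f : x ⟶ y) (g : y ⟶ x),
      u = DirectSum.of (fun z : C => z ⟶ z) x (f ≫ g) -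
            DirectSum.of (fun z : C => z ⟶ z) y (g ≫ f)}

/-- The trace of a `k`-linear category: `Tr C = (⊕_{x} End(x)) / span_k{f∘g − g∘f}`. -/
abbrev Tr (C : Type u) [Category.{0} C] [Preadditive C] [CategoryTheory.Linear k C] :=
  (⨁ x : C, (x ⟶ x)) ⧸ traceRel k C

/-- The trace class `[f] ∈ Tr C` of an endomorphism `f : x ⟶ x`. -/
def traceClass {C : Type u} [Category.{0} C] [Preadditive C] [CategoryTheory.Linear k C]
    {x : C} (f : x ⟶ x) : Tr k C :=
  Submodule.Quotient.mk (DirectSum.of (fun z : C => z ⟶ z) x f)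

section AuxTr

variable {C : Type u} [Category.{0} C] [Preadditive C] [CategoryTheory.Linear k C]

lemma traceClass_add {x : C} (f g : x ⟶ x) :
    traceClass k (f + g) = traceClass k f + traceClass k g := by
  simp only [traceClass, ← Submodule.Quotient.mk_add, map_add]

lemma traceClass_smul {x : C} (c : k) (f : x ⟶ x) :
    traceClass k (c • f) = c • traceClass k f := by
  simp only [traceClass, ← Submodule.Quotient.mk_smul,
    ← DirectSum.lof_eq_of k, map_smul]

lemma traceClass_sum {ι : Type} (s : Finset ι) {x : C} (f : ι → (x ⟶ x)) :
    traceClass k (∑ i ∈ s, f i) = ∑ i ∈ s, traceClass k (f i) := by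
  classical
  induction s using Finset.induction_on with
  | empty => simp [traceClass]
  | insert _ _ h ih => rw [Finset.sum_insert h, Finset.sum_insert h, traceClass_add, ih]

lemma traceClass_comm {x y : C} (f : x ⟶ y) (g : y ⟶ x) :
    traceClass k (f ≫ g) = traceClass k (g ≫ f) := by
  rw [traceClass, traceClass, Submodule.Quotient.eq]
  exact Submodule.subset_span ⟨x, y, f, g, rfl⟩

end AuxTr

section Maps

variable {C : Type} [SmallCategory C] [Preadditive C] [CategoryTheory.Linear k C]

/-- `f ↦ [embedding.map f]` as a linear map on endomorphisms. -/
def embEnd (x : C) : (x ⟶ x) →ₗ[k] Tr k (Mat_ C) where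
  toFun f := traceClass k ((Mat_.embedding C).map f)
  map_add' f g := by rw [Functor.map_add, traceClass_add]
  map_smul' c f := by
    have : (Mat_.embedding C).map (c • f) = c • (Mat_.embedding C).map f := by
      ext i j; rfl
    rw [this, traceClass_smul]; rfl

def Tmap : Tr k C →ₗ[k] Tr k (Mat_ C) :=
  Submodule.liftQ _ (DirectSum.toModule k C _ (fun x => embEnd k x)) (by
    rw [traceRel, Submodule.span_le]
    rintro u ⟨x, y, f, g, rfl⟩
    simp only [SetLike.mem_coe, LinearMap.mem_ker, map_sub]
    rw [← DirectSum.lof_eq_of k, ← DirectSum.lof_eq_of k,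
      DirectSum.toModule_lof, DirectSum.toModule_lof]
    show traceClass k ((Mat_.embedding C).map (f ≫ g)) -
      traceClass k ((Mat_.embedding C).map (g ≫ f)) = 0
    rw [Functor.map_comp, Functor.map_comp, traceClass_comm, sub_self])

lemma Tmap_traceClass {x : C} (f : x ⟶ x) :
    Tmap k (traceClass k f) = traceClass k ((Mat_.embedding C).map f) := by
  rw [Tmap, traceClass, Submodule.liftQ_apply, ← DirectSum.lof_eq_of k,
    DirectSum.toModule_lof]
  rfl

/-- sum of trace classes of diagonal entries, as a linear map. -/
def diagSum (M : Mat_ C) : (M ⟶ M) →ₗ[k] Tr k C where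
  toFun f := ∑ i : M.ι, traceClass k (f i i)
  map_add' f g := by
    simp only [Mat_.add_apply, traceClass_add, Finset.sum_add_distrib]
  map_smul' c f := by
    simp only [mat_smul_apply, traceClass_smul, RingHom.id_apply, Finset.smul_sum]

def Smap : Tr k (Mat_ C) →ₗ[k] Tr k C :=
  Submodule.liftQ _ (DirectSum.toModule k (Mat_ C) _ (fun M => diagSum k M)) (by
    rw [traceRel, Submodule.span_le]
    rintro u ⟨M, N, f, g, rfl⟩
    simp only [SetLike.mem_coe, LinearMap.mem_ker, map_sub]
    rw [← DirectSum.lof_eq_of k, ← DirectSum.lof_eq_of k,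
      DirectSum.toModule_lof, DirectSum.toModule_lof]
    show (∑ i : M.ι, traceClass k ((f ≫ g) i i)) -
      (∑ j : N.ι, traceClass k ((g ≫ f) j j)) = 0
    have h1 : ∀ i : M.ι, traceClass k ((f ≫ g) i i)
        = ∑ j : N.ι, traceClass k (f i j ≫ g j i) := fun i => by
      rw [Mat_.comp_apply, traceClass_sum]
    have h2 : ∀ j : N.ι, traceClass k ((g ≫ f) j j)
        = ∑ i : M.ι, traceClass k (g j i ≫ f i j) := fun j => by
      rw [Mat_.comp_apply, traceClass_sum]
    simp only [h1, h2]
    rw [Finset.sum_comm, sub_eq_zero]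
    congr 1; ext j; congr 1; ext i
    rw [traceClass_comm])

lemma Smap_traceClass (M : Mat_ C) (f : M ⟶ M) :
    Smap k (traceClass k f) = ∑ i : M.ι, traceClass k (f i i) := by
  rw [Smap, traceClass, Submodule.liftQ_apply, ← DirectSum.lof_eq_of k,
    DirectSum.toModule_lof]
  rfl

end Maps


section Key

variable {C : Type} [SmallCategory C] [Preadditive C] [CategoryTheory.Linear k C]

instance uniqueEmbIota (X : C) : Unique ((Mat_.embedding C).obj X).ι :=
  inferInstanceAs (Unique PUnit)

/-- inclusion of the `kk`-th one-entry tuple into `M`. -/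
def inclMat (M : Mat_ C) (kk : M.ι) : (Mat_.embedding C).obj (M.X kk) ⟶ M :=
  fun _ j => if h : kk = j then eqToHom (congrArg M.X h) else 0

/-- projection of `M` onto the `kk`-th one-entry tuple. -/
def projMat (M : Mat_ C) (kk : M.ι) : M ⟶ (Mat_.embedding C).obj (M.X kk) :=
  fun i _ => if h : i = kk then eqToHom (congrArg M.X h) else 0

lemma sum_proj_incl (M : Mat_ C) :
    (∑ kk : M.ι, projMat M kk ≫ inclMat M kk) = 𝟙 M := by
  ext i j
  have hs : (∑ kk : M.ι, projMat M kk ≫ inclMat M kk) i j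
      = ∑ kk : M.ι, (projMat M kk ≫ inclMat M kk) i j := by
    change (∑ kk : M.ι, projMat M kk ≫ inclMat M kk) i j = _
    exact Finset.sum_apply (M := fun i => ∀ j, M.X i ⟶ M.X j) i _ _ ▸ Finset.sum_apply (M := fun j => M.X i ⟶ M.X j) j _ _
  rw [hs, Mat_.id_apply]
  simp only [Mat_.comp_apply, projMat, inclMat, Finset.univ_unique, Finset.sum_singleton,
    dite_comp, comp_dite, zero_comp, comp_zero, eqToHom_trans]
  simp [Finset.sum_dite_eq', Finset.sum_dite_eq]
  split_ifs
  · exact eqToHom_trans _ _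
  · rfl

lemma incl_f_proj (M : Mat_ C) (f : M ⟶ M) (kk : M.ι) :
    inclMat M kk ≫ f ≫ projMat M kk = (Mat_.embedding C).map (f kk kk) := by
  ext i j
  simp only [Mat_.comp_apply, inclMat, projMat, Finset.univ_unique, Finset.sum_singleton,
    dite_comp, comp_dite, zero_comp, comp_zero, Preadditive.sum_comp, Preadditive.comp_sum]
  simp only [Finset.sum_dite_eq', Finset.sum_dite_eq, Finset.mem_univ, if_true,
    eqToHom_refl, Category.id_comp, Category.comp_id]
  simp [Mat_.embedding]

lemma traceClass_mat (M : Mat_ C) (f : M ⟶ M) :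
    traceClass k f = ∑ kk : M.ι, traceClass k ((Mat_.embedding C).map (f kk kk)) := by
  have h0 : f = ∑ kk : M.ι, f ≫ (projMat M kk ≫ inclMat M kk) := by
    rw [← Preadditive.comp_sum, sum_proj_incl, Category.comp_id]
  conv_lhs => rw [h0]
  rw [traceClass_sum]
  refine Finset.sum_congr rfl fun kk _ => ?_
  rw [← Category.assoc, traceClass_comm, incl_f_proj]

end Key

/-- The `k`-linear map `Tr C → Tr Mat(C)` induced by the canonical functor `C ⥤ Mat_ C`
(the unique linear map with `[f] ↦ [embedding.map f]`) is bijective, and its inverse sends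
the trace class of an endomorphism matrix `(f_{k,l})` to the sum `Σ_k [f_{k,k}]` of the
trace classes of its diagonal entries. -/
theorem trace_matrixCategory_bijective (C : Type) [SmallCategory C] [Preadditive C]
    [CategoryTheory.Linear k C] :
    ∃ T : Tr k C →ₗ[k] Tr k (Mat_ C),
      (∀ (x : C) (f : x ⟶ x), T (traceClass k f) = traceClass k ((Mat_.embedding C).map f)) ∧
        Function.Bijective T ∧
        ∀ (M : Mat_ C) (f : M ⟶ M),
          T (∑ i : M.ι, traceClass k (f i i)) = traceClass k f := by
  refine ⟨Tmap k, fun x f => Tmap_traceClass k f, ?_, ?_⟩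
  · have hST : ∀ z : Tr k C, Smap k (Tmap k z) = z := by
      intro z
      obtain ⟨u, rfl⟩ := Submodule.Quotient.mk_surjective _ z
      refine DirectSum.induction_on u ?_ ?_ ?_
      · simp
      · intro x f
        show Smap k (Tmap k (traceClass k f)) = traceClass k f
        rw [Tmap_traceClass, Smap_traceClass]
        rw [Finset.univ_unique, Finset.sum_singleton]
        rfl
      · intro u v hu hv
        rw [Submodule.Quotient.mk_add, map_add, map_add, hu, hv]
    have hTS : ∀ z : Tr k (Mat_ C), Tmap k (Smap k z) = z := by
      intro z
      obtain ⟨u, rfl⟩ := Submodule.Quotient.mk_surjective _ z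
      refine DirectSum.induction_on u ?_ ?_ ?_
      · simp
      · intro M f
        show Tmap k (Smap k (traceClass k f)) = traceClass k f
        rw [Smap_traceClass, map_sum]
        rw [show (∑ i : M.ι, Tmap k (traceClass k (f i i)))
            = ∑ i : M.ι, traceClass k ((Mat_.embedding C).map (f i i)) from
          Finset.sum_congr rfl fun i _ => Tmap_traceClass k (f i i)]
        exact (traceClass_mat k M f).symm
      · intro u v hu hv
        rw [Submodule.Quotient.mk_add, map_add, map_add, hu, hv]
    exact ⟨Function.LeftInverse.injective hST, Function.RightInverse.surjective hTS⟩
  · intro M f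
    rw [map_sum]
    rw [show (∑ i : M.ι, Tmap k (traceClass k (f i i)))
        = ∑ i : M.ι, traceClass k ((Mat_.embedding C).map (f i i)) from
      Finset.sum_congr rfl fun i _ => Tmap_traceClass k (f i i)]
    exact (traceClass_mat k M f).symm


end
end

section
/- Let ν be an n-composition of N with ν_i > 0 for some i ∈ {1,…,n−1}. Then the ring P_{ν−α_i,ν} is a free module over P_ν with basis {X_{k_i}^m : 0 ≤ m ≤ ν_i − 1}, and a free module over P_{ν−α_i} with basis {X_{k_i}^m : 0 ≤ m ≤ ν_{i+1}}. -/
open MvPolynomial Finset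

set_option synthInstance.maxHeartbeats 1000000
set_option maxHeartbeats 2000000

noncomputable section

/-- The elementary symmetric polynomial of degree `l` in the variables indexed by `S`. -/
def esymIn {σ : Type*} [DecidableEq σ] (S : Finset σ) (l : ℕ) : MvPolynomial σ ℂ :=
  ∑ T ∈ S.powersetCard l, ∏ a ∈ T, X a

/-- The complete homogeneous symmetric polynomial of degree `m` in the variables indexed
by `S`. -/
def hsymIn {σ : Type*} [DecidableEq σ] (S : Finset σ) (m : ℕ) : MvPolynomial σ ℂ :=
  ∑ t ∈ S.sym m, (t.1.map X).prod

/-- Complete homogeneous symmetric polynomial with integer degree; zero in negative degree. -/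
def hsymZ {σ : Type*} [DecidableEq σ] (S : Finset σ) (d : ℤ) : MvPolynomial σ ℂ :=
  if 0 ≤ d then hsymIn S d.toNat else 0

/-- The power sum symmetric polynomial of degree `j` in the variables indexed by `S`. -/
def psymIn {σ : Type*} (S : Finset σ) (j : ℕ) : MvPolynomial σ ℂ :=
  ∑ a ∈ S, X a ^ j

variable (n N : ℕ)

/-- The partial sum `ν_0 + ⋯ + ν_{t−1}` of a composition `ν`. -/
def kpart (ν : Fin n → ℕ) (t : ℕ) : ℕ :=
  ∑ j ∈ Finset.univ.filter fun j : Fin n => (j : ℕ) < t, ν j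

/-- The `i`-th block of variables `Ω_i = {a | k_{i−1} ≤ a < k_i}` (0-based). -/
def blockOf (ν : Fin n → ℕ) (i : Fin n) : Finset (Fin N) :=
  Finset.univ.filter fun a : Fin N =>
    kpart n ν (i : ℕ) ≤ (a : ℕ) ∧ (a : ℕ) < kpart n ν ((i : ℕ) + 1)

/-- A permutation of the variables preserving each block of `ν`. -/
def BlockPreserving (ν : Fin n → ℕ) (σp : Equiv.Perm (Fin N)) : Prop :=
  ∀ i : Fin n, ∀ a ∈ blockOf n N ν i, σp a ∈ blockOf n N ν i

/-- `P_ν`: the subalgebra of polynomials invariant under the Young subgroup `S_ν`. -/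
def Psub (ν : Fin n → ℕ) : Subalgebra ℂ (MvPolynomial (Fin N) ℂ) where
  carrier := {p | ∀ σp : Equiv.Perm (Fin N), BlockPreserving n N ν σp → rename σp p = p}
  mul_mem' := fun hp hq σp hσ => by rw [map_mul, hp σp hσ, hq σp hσ]
  add_mem' := fun hp hq σp hσ => by rw [map_add, hp σp hσ, hq σp hσ]
  one_mem' := fun σp hσ => by simp
  zero_mem' := fun σp hσ => by simp
  algebraMap_mem' := fun c σp hσ => by simp [MvPolynomial.algebraMap_eq]

/-- The composition `ν − α_i` (for `i' = i+1`). -/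
def subAlpha (ν : Fin n → ℕ) (i i' : Fin n) : Fin n → ℕ :=
  Function.update (Function.update ν i (ν i - 1)) i' (ν i' + 1)

/-- The composition `ν + α_i` (for `i' = i+1`). -/
def addAlpha (ν : Fin n → ℕ) (i i' : Fin n) : Fin n → ℕ :=
  Function.update (Function.update ν i (ν i + 1)) i' (ν i' - 1)

open Fin.NatCast in
/-- The variable `X_{k_i}` (the last variable of the `i`-th block), 0-based. -/
def varF [NeZero N] (ν : Fin n → ℕ) (i : Fin n) : Fin N :=
  ((kpart n ν ((i : ℕ) + 1) - 1 : ℕ) : Fin N)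

open Fin.NatCast in
/-- The variable `X_{k_i + 1}` (the first variable of the `(i+1)`-st block), 0-based. -/
def varE [NeZero N] (ν : Fin n → ℕ) (i : Fin n) : Fin N :=
  ((kpart n ν ((i : ℕ) + 1) : ℕ) : Fin N)

/-- The value of `F_{i,j}` on the basis element `X_{k_i}^m`:
`Σ_{l=0}^{ν_i−1} (−1)^l e_l(ν−α_i;i) h_{m+j+ν_i−ν_{i+1}−1−l}(ν−α_i;i+1)`. -/
def Fval (ν : Fin n → ℕ) (i i' : Fin n) (j m : ℕ) : MvPolynomial (Fin N) ℂ :=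
  ∑ l ∈ Finset.range (ν i),
    (-1 : MvPolynomial (Fin N) ℂ) ^ l * esymIn (blockOf n N (subAlpha n ν i i') i) l *
      hsymZ (blockOf n N (subAlpha n ν i i') i')
        ((m : ℤ) + (j : ℤ) + (ν i : ℤ) - (ν i' : ℤ) - 1 - (l : ℤ))

/-- The value of `E_{i,j}` on the basis element `X_{k_i+1}^m`:
`Σ_{l=0}^{ν_{i+1}−1} (−1)^l e_l(ν+α_i;i+1) h_{m+j+ν_{i+1}−ν_i−1−l}(ν+α_i;i)`. -/
def Eval (ν : Fin n → ℕ) (i i' : Fin n) (j m : ℕ) : MvPolynomial (Fin N) ℂ :=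
  ∑ l ∈ Finset.range (ν i'),
    (-1 : MvPolynomial (Fin N) ℂ) ^ l * esymIn (blockOf n N (addAlpha n ν i i') i') l *
      hsymZ (blockOf n N (addAlpha n ν i i') i)
        ((m : ℤ) + (j : ℤ) + (ν i' : ℤ) - (ν i : ℤ) - 1 - (l : ℤ))

/-- `F` is (the restriction to `P_ν` of) the unique `P_{ν−α_i}`-linear map on
`P_{ν−α_i,ν}` sending the basis element `X_{k_i}^m` (`0 ≤ m ≤ ν_{i+1}`) to
`Σ_{l=0}^{ν_i−1} (−1)^l e_l(ν−α_i;i) h_{m+j+ν_i−ν_{i+1}−1−l}(ν−α_i;i+1)`;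
when `ν_i = 0` the target is the zero ring and `F` is the zero map. -/
def FSpec [NeZero N] (ν : Fin n → ℕ) (i i' : Fin n) (j : ℕ)
    (F : MvPolynomial (Fin N) ℂ → MvPolynomial (Fin N) ℂ) : Prop :=
  F 0 = 0 ∧
    (ν i = 0 → ∀ p ∈ Psub n N ν, F p = 0) ∧
    (0 < ν i → ∀ (p : MvPolynomial (Fin N) ℂ) (c : ℕ → MvPolynomial (Fin N) ℂ),
      p ∈ Psub n N ν → (∀ m, c m ∈ Psub n N (subAlpha n ν i i')) →
      p = ∑ m ∈ Finset.range (ν i' + 1), c m * X (varF n N ν i) ^ m →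
      F p = ∑ m ∈ Finset.range (ν i' + 1), c m * Fval n N ν i i' j m)

/-- `E` is (the restriction to `P_ν` of) the unique `P_{ν+α_i}`-linear map on
`P_{ν+α_i,ν}` sending the basis element `X_{k_i+1}^m` (`0 ≤ m ≤ ν_{i+1}−1`) to
`Σ_{l=0}^{ν_{i+1}−1} (−1)^l e_l(ν+α_i;i+1) h_{m+j+ν_{i+1}−ν_i−1−l}(ν+α_i;i)`;
when `ν_{i+1} = 0` the target is the zero ring and `E` is the zero map. -/
def ESpec [NeZero N] (ν : Fin n → ℕ) (i i' : Fin n) (j : ℕ)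
    (E : MvPolynomial (Fin N) ℂ → MvPolynomial (Fin N) ℂ) : Prop :=
  E 0 = 0 ∧
    (ν i' = 0 → ∀ p ∈ Psub n N ν, E p = 0) ∧
    (0 < ν i' → ∀ (p : MvPolynomial (Fin N) ℂ) (c : ℕ → MvPolynomial (Fin N) ℂ),
      p ∈ Psub n N ν → (∀ m, c m ∈ Psub n N (addAlpha n ν i i')) →
      p = ∑ m ∈ Finset.range (ν i'), c m * X (varE n N ν i) ^ m →
      E p = ∑ m ∈ Finset.range (ν i'), c m * Eval n N ν i i' j m)

/-- A family `(ν, i, j) ↦ F_{i,j} : P_ν → P_{ν−α_i}` of operators, each satisfying its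
defining specification (at every `n`-composition of `N`). -/
def FFam [NeZero N]
    (Ff : (Fin n → ℕ) → Fin n → ℕ → MvPolynomial (Fin N) ℂ → MvPolynomial (Fin N) ℂ) : Prop :=
  ∀ (ν : Fin n → ℕ) (i : Fin n) (hi : (i : ℕ) + 1 < n) (j : ℕ),
    Ff ν i j 0 = 0 ∧ ((∑ a, ν a) = N → FSpec n N ν i ⟨(i : ℕ) + 1, hi⟩ j (Ff ν i j))

/-- A family `(ν, i, j) ↦ E_{i,j} : P_ν → P_{ν+α_i}` of operators, each satisfying its
defining specification (at every `n`-composition of `N`). -/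
def EFam [NeZero N]
    (Ef : (Fin n → ℕ) → Fin n → ℕ → MvPolynomial (Fin N) ℂ → MvPolynomial (Fin N) ℂ) : Prop :=
  ∀ (ν : Fin n → ℕ) (i : Fin n) (hi : (i : ℕ) + 1 < n) (j : ℕ),
    Ef ν i j 0 = 0 ∧ ((∑ a, ν a) = N → ESpec n N ν i ⟨(i : ℕ) + 1, hi⟩ j (Ef ν i j))


/-- The refined `(n+1)`-composition `(ν_1, …, ν_{i−1}, ν_i − 1, 1, ν_{i+1}, …, ν_n)`,
whose invariant ring is `P_{ν−α_i,ν}`. -/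
def refineMinus (ν : Fin n → ℕ) (i : Fin n) : Fin (n + 1) → ℕ :=
  Fin.insertNth ⟨(i : ℕ) + 1, Nat.succ_lt_succ i.isLt⟩ 1 (Function.update ν i (ν i - 1))


namespace PRF
variable {n : ℕ} {N : ℕ}

abbrev PP (N : ℕ) := MvPolynomial (Fin N) ℂ

/-- Substitution `X a ↦ X b`, all other variables fixed. -/
def substOne (a b : Fin N) : PP N →ₐ[ℂ] PP N :=
  aeval (Function.update X a (X b))

lemma substOne_X_same (a b : Fin N) : substOne a b (X a) = X b := by
  simp [substOne]

lemma substOne_X_ne (a b : Fin N) {c : Fin N} (h : c ≠ a) : substOne a b (X c) = X c := by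
  simp [substOne, Function.update_of_ne h]

lemma substOne_comp_swap (a b : Fin N) :
    (substOne a b).comp (rename (Equiv.swap a b) : PP N →ₐ[ℂ] PP N) = substOne a b := by
  by_cases hab : a = b
  · subst hab
    apply MvPolynomial.algHom_ext
    intro c
    simp [Equiv.swap_self]
  apply MvPolynomial.algHom_ext
  intro c
  simp only [AlgHom.comp_apply, rename_X]
  by_cases hca : c = a
  · subst hca
    rw [Equiv.swap_apply_left, substOne_X_same, substOne_X_ne c b fun he => hab he.symm]
  · by_cases hcb : c = b
    · rw [hcb, Equiv.swap_apply_right, substOne_X_same,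
        substOne_X_ne a b (fun he => hab he.symm)]
    · rw [Equiv.swap_apply_of_ne_of_ne hca hcb]

lemma sub_substOne_mem (a b : Fin N) (f : PP N) :
    f - substOne a b f ∈ Ideal.span {(X a - X b : PP N)} := by
  induction f using MvPolynomial.induction_on with
  | C r => simp
  | add p q hp hq =>
      have : p + q - substOne a b (p + q) = (p - substOne a b p) + (q - substOne a b q) := by
        rw [map_add]; ring
      rw [this]; exact Ideal.add_mem _ hp hq
  | mul_X p c hp =>
      have : p * X c - substOne a b (p * X c)
          = (p - substOne a b p) * X c + substOne a b p * (X c - substOne a b (X c)) := by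
        rw [map_mul]; ring
      rw [this]
      refine Ideal.add_mem _ (Ideal.mul_mem_right _ _ hp) (Ideal.mul_mem_left _ _ ?_)
      rcases eq_or_ne c a with rfl | hca
      · rw [substOne_X_same]; exact Ideal.subset_span rfl
      · rw [substOne_X_ne a b hca, sub_self]; exact Ideal.zero_mem _

lemma span_eq_ker (a b : Fin N) :
    Ideal.span {(X a - X b : PP N)} = RingHom.ker (substOne a b : PP N →ₐ[ℂ] PP N).toRingHom := by
  apply le_antisymm
  · rw [Ideal.span_le, Set.singleton_subset_iff]
    simp only [SetLike.mem_coe, RingHom.mem_ker, AlgHom.toRingHom_eq_coe, RingHom.coe_coe]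
    rcases eq_or_ne a b with rfl | hab
    · simp
    · rw [map_sub, substOne_X_same, substOne_X_ne a b (Ne.symm hab), sub_self]
  · intro f hf
    have h0 : substOne a b f = 0 := hf
    have := sub_substOne_mem a b f
    rwa [h0, sub_zero] at this

lemma X_sub_X_ne_zero {a b : Fin N} (h : a ≠ b) : (X a - X b : PP N) ≠ 0 :=
  sub_ne_zero.mpr fun he => h (MvPolynomial.X_injective he)

lemma prime_X_sub_X {a b : Fin N} (h : a ≠ b) : Prime (X a - X b : PP N) := by
  rw [← Ideal.span_singleton_prime (X_sub_X_ne_zero h), span_eq_ker]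
  exact RingHom.ker_isPrime _

lemma dvd_of_antisym {a b : Fin N} (h : a ≠ b) {f : PP N}
    (hf : rename (Equiv.swap a b) f = -f) : (X a - X b : PP N) ∣ f := by
  have h2 : substOne a b f = 0 := by
    have e1 : substOne a b (rename (Equiv.swap a b) f) = substOne a b f := by
      have := congrArg (fun g => g f) (substOne_comp_swap a b)
      simpa using this
    rw [hf, map_neg] at e1
    have h3 : (2 : ℂ) • substOne a b f = 0 := by
      rw [two_smul]
      nth_rewrite 1 [← e1]
      ring
    rcases smul_eq_zero.mp h3 with h4 | h4
    · exact absurd h4 two_ne_zero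
    · exact h4
  have := sub_substOne_mem a b f
  rw [h2, sub_zero] at this
  exact (Ideal.mem_span_singleton).mp this

lemma not_associated_X_sub_X {a b c d : Fin N} (hab : a ≠ b) (hcd : c ≠ d)
    (h1 : ¬(a = c ∧ b = d)) (h2 : ¬(a = d ∧ b = c)) :
    ¬ Associated (X a - X b : PP N) (X c - X d) := by
  rintro ⟨u, hu⟩
  -- helper: substitute to kill RHS while keeping LHS alive
  by_cases hc : c = a ∨ c = b
  · by_cases hd : d = a ∨ d = b
    · -- {c,d} ⊆ {a,b} nontrivially ⇒ {c,d} = {a,b}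
      rcases hc with rfl | rfl
      · rcases hd with rfl | rfl
        · exact hcd rfl
        · exact h1 ⟨rfl, rfl⟩
      · rcases hd with rfl | rfl
        · exact h2 ⟨rfl, rfl⟩
        · exact hcd rfl
    · -- d ∉ {a,b}: substitute X d ↦ X c
      push_neg at hd
      have hs := congrArg (substOne d c) hu
      rw [map_mul, map_sub, map_sub, substOne_X_same, substOne_X_ne d c hcd,
        substOne_X_ne d c hd.1.symm, substOne_X_ne d c hd.2.symm, sub_self] at hs
      have hune : substOne d c ↑u ≠ 0 := (u.isUnit.map (substOne d c)).ne_zero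
      rcases mul_eq_zero.mp hs with h5 | h5
      · exact X_sub_X_ne_zero hab h5
      · exact hune h5
  · -- c ∉ {a,b}: substitute X c ↦ X d
    push_neg at hc
    have hs := congrArg (substOne c d) hu
    rw [map_mul, map_sub, map_sub, substOne_X_same, substOne_X_ne c d hcd.symm,
      substOne_X_ne c d hc.1.symm, substOne_X_ne c d hc.2.symm, sub_self] at hs
    have hune : substOne c d ↑u ≠ 0 := (u.isUnit.map (substOne c d)).ne_zero
    rcases mul_eq_zero.mp hs with h5 | h5
    · exact X_sub_X_ne_zero hab h5
    · exact hune h5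

/-- Product of pairwise non-associated primes each dividing `nn` divides `nn`. -/
lemma prod_primes_dvd' {α : Type*} [CommMonoidWithZero α] [IsCancelMulZero α] {ι : Type*} [DecidableEq ι]
    (s : Finset ι) (f : ι → α)
    (hp : ∀ i ∈ s, Prime (f i))
    (hpair : ∀ i ∈ s, ∀ j ∈ s, i ≠ j → ¬ Associated (f i) (f j)) :
    ∀ nn : α, (∀ i ∈ s, f i ∣ nn) → (∏ i ∈ s, f i) ∣ nn := by
  classical
  induction s using Finset.induction_on with
  | empty => intro nn _; simp
  | insert a s hanotin ih =>
      intro nn hdvd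
      obtain ⟨n', rfl⟩ := hdvd a (Finset.mem_insert_self a s)
      rw [Finset.prod_insert hanotin]
      refine mul_dvd_mul_left _ (ih (fun i hi => hp i (Finset.mem_insert_of_mem hi))
        (fun i hi j hj hij => hpair i (Finset.mem_insert_of_mem hi) j
          (Finset.mem_insert_of_mem hj) hij) n' (fun i hi => ?_))
      have hdi := hdvd i (Finset.mem_insert_of_mem hi)
      have hpi := hp i (Finset.mem_insert_of_mem hi)
      rcases hpi.dvd_or_dvd hdi with h5 | h5
      · exfalso
        exact hpair i (Finset.mem_insert_of_mem hi) a (Finset.mem_insert_self a s)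
          (fun he => hanotin (he ▸ hi))
          (hpi.associated_of_dvd (hp a (Finset.mem_insert_self a s)) h5)
      · exact h5


section Abstract

variable {d : ℕ} (x : Fin N) (Ω : Finset (Fin N))
variable (Gν Gref : Equiv.Perm (Fin N) → Prop)
variable (A B : Subalgebra ℂ (PP N))

theorem abstract_li (hx : x ∈ Ω) (hcard : Ω.card = d)
    (hB : ∀ p : PP N, p ∈ B ↔ ∀ σ, Gν σ → rename σ p = p)
    (h3 : ∀ a ∈ Ω, ∀ b ∈ Ω, Gν (Equiv.swap a b)) :
    LinearIndependent B (fun m : Fin d => (X x : PP N) ^ (m : ℕ)) := by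
  classical
  have e : Fin d ≃ Ω := (Finset.equivFinOfCardEq hcard).symm
  set v : Fin d → Fin N := fun r => (e r : Fin N) with hv
  have hvinj : Function.Injective v := fun r s h => e.injective (Subtype.ext h)
  set V : Matrix (Fin d) (Fin d) (PP N) := Matrix.vandermonde (fun r => (X (v r) : PP N)) with hV
  have hΔ : V.det ≠ 0 :=
    Matrix.det_vandermonde_ne_zero_iff.mpr (fun r s h => hvinj (MvPolynomial.X_injective h))
  rw [Fintype.linearIndependent_iff]
  intro g hg
  have hg' : ∑ m : Fin d, (g m : PP N) * X x ^ (m : ℕ) = 0 := by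
    rw [← hg]
    exact Finset.sum_congr rfl fun m _ => rfl
  have key : ∀ a ∈ Ω, ∑ m : Fin d, (g m : PP N) * X a ^ (m : ℕ) = 0 := by
    intro a ha
    have hswap := h3 x hx a ha
    have h0 := congrArg (rename (Equiv.swap x a) : PP N →ₐ[ℂ] PP N) hg'
    rw [map_sum, map_zero] at h0
    rw [← h0]
    refine Finset.sum_congr rfl fun m _ => ?_
    rw [map_mul, map_pow, rename_X, Equiv.swap_apply_left,
      (hB (g m : PP N)).mp (g m).2 _ hswap]
  have hmul : V.mulVec (fun m => (g m : PP N)) = 0 := by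
    funext r
    have := key (v r) (e r).2
    simpa [Matrix.mulVec, dotProduct, hV, Matrix.vandermonde, mul_comm] using this
  have hzero : V.det • (fun m => (g m : PP N)) = 0 := by
    calc V.det • (fun m => (g m : PP N))
        = (V.det • (1 : Matrix (Fin d) (Fin d) (PP N))).mulVec (fun m => (g m : PP N)) := by
          rw [Matrix.smul_mulVec, Matrix.one_mulVec]
      _ = (V.adjugate * V).mulVec (fun m => (g m : PP N)) := by rw [Matrix.adjugate_mul]
      _ = V.adjugate.mulVec (V.mulVec (fun m => (g m : PP N))) := by
          rw [Matrix.mulVec_mulVec]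
      _ = 0 := by rw [hmul, Matrix.mulVec_zero]
  intro m
  have := congrFun hzero m
  simp only [Pi.smul_apply, smul_eq_mul, Pi.zero_apply] at this
  rcases mul_eq_zero.mp this with h | h
  · exact absurd h hΔ
  · exact Subtype.ext h


theorem abstract_span (hx : x ∈ Ω) (hcard : Ω.card = d)
    (hA : ∀ p : PP N, p ∈ A ↔ ∀ σ, Gref σ → rename σ p = p)
    (hB : ∀ p : PP N, p ∈ B ↔ ∀ σ, Gν σ → rename σ p = p)
    (h1 : ∀ σ, Gref σ → Gν σ)
    (h2 : ∀ σ, Gref σ → σ x = x)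
    (h3 : ∀ a ∈ Ω, ∀ b ∈ Ω, Gν (Equiv.swap a b))
    (h4 : ∀ σ, Gν σ → ∀ a ∈ Ω, σ a ∈ Ω)
    (h5 : ∀ σ, Gν σ → σ x = x → Gref σ)
    (h6 : ∀ σ τ, Gν σ → Gν τ → Gν (σ * τ)) :
    (Submodule.span B (Set.range fun m : Fin d => (X x : PP N) ^ (m : ℕ)) :
        Set (PP N)) = (A : Set (PP N)) := by
  classical
  apply Set.eq_of_subset_of_subset
  · -- span ⊆ A
    intro q hq
    have hBA : ∀ b : PP N, b ∈ B → b ∈ A := by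
      intro b hb
      exact (hA b).mpr fun σ hσ => (hB b).mp hb σ (h1 σ hσ)
    have hpow : ∀ m : Fin d, ((X x : PP N) ^ (m : ℕ)) ∈ A := by
      intro m
      refine (hA _).mpr fun σ hσ => ?_
      rw [map_pow, rename_X, h2 σ hσ]
    refine Submodule.span_induction ?_ ?_ ?_ ?_ hq
    · rintro _ ⟨m, rfl⟩; exact hpow m
    · exact A.zero_mem
    · intro p q _ _ hp hq; exact A.add_mem hp hq
    · intro b q _ hq
      exact A.mul_mem (hBA _ b.2) hq
  · -- A ⊆ span
    intro p hp
    have e : Fin d ≃ Ω := (Finset.equivFinOfCardEq hcard).symm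
    set v : Fin d → Fin N := fun r => (e r : Fin N) with hvdef
    have hvinj : Function.Injective v := fun r s h => e.injective (Subtype.ext h)
    have hvmem : ∀ r, v r ∈ Ω := fun r => (e r).2
    set V : Matrix (Fin d) (Fin d) (PP N) :=
      Matrix.vandermonde (fun r => (X (v r) : PP N)) with hVdef
    have hΔ : V.det ≠ 0 :=
      Matrix.det_vandermonde_ne_zero_iff.mpr (fun r s h => hvinj (MvPolynomial.X_injective h))
    set pa : Fin N → PP N := fun a => rename (Equiv.swap x a) p with hpadef
    have hpax : pa x = p := by
      simp [hpadef, Equiv.swap_self]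
    -- equivariance of pa
    have f2 : ∀ σ, Gν σ → ∀ a ∈ Ω, rename σ (pa a) = pa (σ a) := by
      intro σ hσ a ha
      set τ : Equiv.Perm (Fin N) := Equiv.swap x (σ a) * σ * Equiv.swap x a with hτ
      have hτν : Gν τ := h6 _ _ (h6 _ _ (h3 x hx (σ a) (h4 σ hσ a ha)) hσ) (h3 x hx a ha)
      have hτx : τ x = x := by
        simp [hτ, Equiv.Perm.mul_apply, Equiv.swap_apply_left, Equiv.swap_apply_right]
      have hτp : rename (τ : Fin N → Fin N) p = p := (hA p).mp hp τ (h5 τ hτν hτx)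
      have hcomp : (σ : Fin N → Fin N) ∘ (Equiv.swap x a : Fin N → Fin N)
          = (Equiv.swap x (σ a) : Fin N → Fin N) ∘ (τ : Fin N → Fin N) := by
        funext z
        simp [hτ, Equiv.Perm.mul_apply, Equiv.swap_apply_self]
      calc rename σ (pa a) = rename ((σ : Fin N → Fin N) ∘ (Equiv.swap x a : Fin N → Fin N)) p := by
            rw [hpadef]; exact rename_rename _ _ p
        _ = rename (Equiv.swap x (σ a) : Fin N → Fin N) (rename (τ : Fin N → Fin N) p) := by
            rw [hcomp, ← rename_rename]
        _ = pa (σ a) := by rw [hτp]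
    set b : Fin d → PP N := fun r => pa (v r) with hbdef
    set cram : Fin d → PP N := fun m => (V.updateCol m b).det with hcramdef
    -- semi-invariance of determinants
    have semiinv : ∀ σ, Gν σ → ∃ επ : Equiv.Perm (Fin d), (∀ r, v (επ r) = σ (v r)) ∧
        ∀ (M : Matrix (Fin d) (Fin d) (PP N)),
          (∀ r c', rename σ (M r c') = M (επ r) c') →
          rename σ M.det = ((Equiv.Perm.sign επ : ℤ) : PP N) * M.det := by
      intro σ hσ
      have hπinj : Function.Injective (fun r => e.symm ⟨σ (v r), h4 σ hσ (v r) (hvmem r)⟩) := by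
        intro r s h
        have := congrArg (fun z => ((e z : Fin N))) h
        simp only [Equiv.apply_symm_apply] at this
        exact hvinj (σ.injective this)
      set επ : Equiv.Perm (Fin d) :=
        Equiv.ofBijective _ (Finite.injective_iff_bijective.mp hπinj) with hεπ
      have hvε : ∀ r, v (επ r) = σ (v r) := by
        intro r
        show ((e (e.symm ⟨σ (v r), _⟩) : Fin N)) = σ (v r)
        rw [Equiv.apply_symm_apply]
      refine ⟨επ, hvε, fun M hM => ?_⟩
      have hmap : (((rename (σ : Fin N → Fin N) : PP N →ₐ[ℂ] PP N) :
          PP N →+* PP N)).mapMatrix M = M.submatrix επ id := by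
        refine Matrix.ext fun r c' => ?_
        simp only [RingHom.mapMatrix_apply, Matrix.map_apply, Matrix.submatrix_apply, id_eq,
          RingHom.coe_coe]
        exact hM r c'
      rw [show rename (σ : Fin N → Fin N) M.det
          = (((rename (σ : Fin N → Fin N) : PP N →ₐ[ℂ] PP N) : PP N →+* PP N)) M.det from rfl,
        RingHom.map_det, hmap, Matrix.det_permute]
    -- application to cram and V.det
    have hMcram : ∀ σ (hσ : Gν σ) (επ : Equiv.Perm (Fin d)) (hvε : ∀ r, v (επ r) = σ (v r))
        (m : Fin d) (r c' : Fin d),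
        rename σ ((V.updateCol m b) r c') = (V.updateCol m b) (επ r) c' := by
      intro σ hσ επ hvε m r c'
      rw [Matrix.updateCol_apply, Matrix.updateCol_apply]
      by_cases hc : c' = m
      · simp only [if_pos hc]
        rw [hbdef]
        show rename σ (pa (v r)) = pa (v (επ r))
        rw [f2 σ hσ (v r) (hvmem r), hvε]
      · simp only [if_neg hc]
        show rename σ ((X (v r) : PP N) ^ (c' : ℕ)) = (X (v (επ r)) : PP N) ^ (c' : ℕ)
        rw [map_pow, rename_X, hvε]
    have hsv : ∀ σ, Gν σ → ∃ ε : PP N, (ε = 1 ∨ ε = -1) ∧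
        (∀ m, rename σ (cram m) = ε * cram m) ∧ rename σ V.det = ε * V.det := by
      intro σ hσ
      obtain ⟨επ, hvε, hdet⟩ := semiinv σ hσ
      refine ⟨((Equiv.Perm.sign επ : ℤ) : PP N), ?_, fun m => ?_, ?_⟩
      · rcases Int.units_eq_one_or (Equiv.Perm.sign επ) with h | h <;> rw [h] <;> simp
      · exact hdet _ (hMcram σ hσ επ hvε m)
      · refine hdet V (fun r c' => ?_)
        show rename σ ((X (v r) : PP N) ^ (c' : ℕ)) = (X (v (επ r)) : PP N) ^ (c' : ℕ)
        rw [map_pow, rename_X, hvε]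
    -- antisymmetry of cram under swaps within Ω
    have hanti : ∀ (i j : Fin d), i ≠ j → ∀ m,
        rename (Equiv.swap (v i) (v j)) (cram m) = -(cram m) := by
      intro i j hij m
      have hσν : Gν (Equiv.swap (v i) (v j)) := h3 _ (hvmem i) _ (hvmem j)
      obtain ⟨επ, hvε, hdet⟩ := semiinv _ hσν
      have hεπ : επ = Equiv.swap i j := by
        apply Equiv.ext
        intro r
        apply hvinj
        rw [hvε]
        rcases eq_or_ne r i with rfl | hri
        · rw [Equiv.swap_apply_left, Equiv.swap_apply_left]
        · rcases eq_or_ne r j with rfl | hrj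
          · rw [Equiv.swap_apply_right, Equiv.swap_apply_right]
          · rw [Equiv.swap_apply_of_ne_of_ne (fun h => hri (hvinj h))
              (fun h => hrj (hvinj h)),
              Equiv.swap_apply_of_ne_of_ne hri hrj]
      have hthis := hdet _ (hMcram _ hσν επ hvε m)
      rw [hεπ, Equiv.Perm.sign_swap hij] at hthis
      rw [hthis]
      push_cast
      ring
    -- divisibility
    have hdvd : ∀ m, V.det ∣ cram m := by
      intro m
      have hdet : V.det = ∏ p ∈ (Finset.univ : Finset (Fin d)).sigma (fun i => Finset.Ioi i),
          ((X (v p.2) : PP N) - X (v p.1)) := by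
        rw [hVdef, Matrix.det_vandermonde, Finset.prod_sigma]
      rw [hdet]
      have hne : ∀ p : (_ : Fin d) × Fin d,
          p ∈ (Finset.univ : Finset (Fin d)).sigma (fun i => Finset.Ioi i) → v p.2 ≠ v p.1 := by
        intro p hp
        rw [Finset.mem_sigma] at hp
        have : p.1 < p.2 := Finset.mem_Ioi.mp hp.2
        exact fun h => absurd (hvinj h) (ne_of_gt this)
      refine prod_primes_dvd' _ _ (fun p hp => prime_X_sub_X (hne p hp)) ?_ _ (fun p hp => ?_)
      · intro p hp q hq hpq
        rw [Finset.mem_sigma] at hp hq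
        have hp2 : p.1 < p.2 := Finset.mem_Ioi.mp hp.2
        have hq2 : q.1 < q.2 := Finset.mem_Ioi.mp hq.2
        refine not_associated_X_sub_X (hne p (Finset.mem_sigma.mpr hp))
          (hne q (Finset.mem_sigma.mpr hq)) ?_ ?_
        · rintro ⟨ha, hb⟩
          exact hpq (Sigma.ext (hvinj hb) (heq_of_eq (hvinj ha)))
        · rintro ⟨ha, hb⟩
          have e1 : p.2 = q.1 := hvinj ha
          have e2 : p.1 = q.2 := hvinj hb
          have hcon := hp2.trans (lt_of_eq_of_lt e1 hq2)
          rw [← e2] at hcon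
          exact lt_irrefl _ hcon
      · rw [Finset.mem_sigma] at hp
        have hlt : p.1 < p.2 := Finset.mem_Ioi.mp hp.2
        refine dvd_of_antisym (hne p (Finset.mem_sigma.mpr hp)) ?_
        rw [Equiv.swap_comm]
        exact hanti p.1 p.2 (ne_of_lt hlt) m
    -- extract quotients
    have hdvd2 : ∀ m, ∃ cc : PP N, cram m = V.det * cc := fun m => (hdvd m).imp fun cc hcc => hcc
    choose c hc using hdvd2
    -- quotients are invariant
    have hcB : ∀ m, c m ∈ B := by
      intro m
      refine (hB (c m)).mpr fun σ hσ => ?_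
      obtain ⟨ε, hε, hcr, hΔr⟩ := hsv σ hσ
      have hεΔ : ε * V.det ≠ 0 := by
        rcases hε with rfl | rfl
        · simpa using hΔ
        · simpa using hΔ
      have h7 := hcr m
      rw [hc m, map_mul, hΔr] at h7
      have h8 : (ε * V.det) * rename (σ : Fin N → Fin N) (c m) = (ε * V.det) * c m := by
        rw [h7]; ring
      exact mul_left_cancel₀ hεΔ h8
    -- the key identity
    have hkey : p = ∑ m : Fin d, c m * (X x : PP N) ^ (m : ℕ) := by
      set r₀ : Fin d := e.symm ⟨x, hx⟩ with hr₀
      have hvr₀ : v r₀ = x := by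
        show ((e (e.symm ⟨x, hx⟩) : Fin N)) = x
        rw [Equiv.apply_symm_apply]
      have hVr₀ : ∀ m : Fin d, V r₀ m = (X x : PP N) ^ (m : ℕ) := by
        intro m; rw [hVdef, Matrix.vandermonde_apply, hvr₀]
      have hbr₀ : b r₀ = p := by
        rw [hbdef]; show pa (v r₀) = p; rw [hvr₀, hpax]
      have h9 := congrFun (Matrix.mulVec_cramer V b) r₀
      simp only [Matrix.mulVec, dotProduct, Pi.smul_apply, smul_eq_mul] at h9
      rw [hbr₀] at h9
      have h11 : ∑ m : Fin d, V r₀ m * V.cramer b m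
          = ∑ m : Fin d, V.det * (c m * (X x : PP N) ^ (m : ℕ)) := by
        refine Finset.sum_congr rfl fun m _ => ?_
        rw [hVr₀ m, Matrix.cramer_apply,
          show ((V.updateCol m b).det : PP N) = cram m from rfl, hc m]
        ring
      rw [h11, ← Finset.mul_sum] at h9
      exact (mul_left_cancel₀ hΔ h9).symm
    rw [hkey]
    refine Submodule.sum_mem _ fun m _ => ?_
    have hsmul : c m * (X x : PP N) ^ (m : ℕ)
        = (⟨c m, hcB m⟩ : B) • ((X x : PP N) ^ (m : ℕ)) := rfl
    rw [hsmul]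
    exact Submodule.smul_mem _ _ (Submodule.subset_span ⟨m, rfl⟩)

end Abstract


variable {n N : ℕ}

lemma kpart_eq (ν : Fin n → ℕ) (t : ℕ) :
    kpart n ν t = ∑ j : Fin n, if (j : ℕ) < t then ν j else 0 := by
  rw [kpart, Finset.sum_filter]

lemma kpart_mono (ν : Fin n → ℕ) {s t : ℕ} (h : s ≤ t) : kpart n ν s ≤ kpart n ν t := by
  rw [kpart_eq, kpart_eq]
  exact Finset.sum_le_sum fun j _ => by split_ifs with h1 h2 <;> omega

lemma kpart_succ (ν : Fin n → ℕ) {t : ℕ} (h : t < n) :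
    kpart n ν (t + 1) = kpart n ν t + ν ⟨t, h⟩ := by
  rw [kpart_eq, kpart_eq]
  have : ∀ j : Fin n, (if (j : ℕ) < t + 1 then ν j else 0)
      = (if (j : ℕ) < t then ν j else 0) + (if j = ⟨t, h⟩ then ν j else 0) := by
    intro j
    rcases eq_or_ne j ⟨t, h⟩ with rfl | hj
    · simp
    · have : (j : ℕ) ≠ t := fun he => hj (Fin.ext he)
      split_ifs <;> omega
  rw [Finset.sum_congr rfl fun j _ => this j, Finset.sum_add_distrib,
    Finset.sum_ite_eq' Finset.univ (⟨t, h⟩ : Fin n)]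
  simp

lemma kpart_total (ν : Fin n → ℕ) {t : ℕ} (h : n ≤ t) : kpart n ν t = ∑ a, ν a := by
  rw [kpart_eq]
  exact Finset.sum_congr rfl fun j _ => by
    rw [if_pos (lt_of_lt_of_le j.isLt h)]

section RefKpart
variable (ν : Fin n → ℕ) (i : Fin n)

lemma succAbove_val (p : Fin (n + 1)) (j : Fin n) :
    ((p.succAbove j : Fin (n + 1)) : ℕ) = if (j : ℕ) < (p : ℕ) then (j : ℕ) else (j : ℕ) + 1 := by
  rw [Fin.succAbove]
  by_cases h : (j : ℕ) < (p : ℕ)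
  · have h' : Fin.castSucc j < p := by rwa [Fin.lt_def, Fin.coe_castSucc]
    rw [if_pos h', if_pos h, Fin.coe_castSucc]
  · have h' : ¬ Fin.castSucc j < p := by rwa [Fin.lt_def, Fin.coe_castSucc]
    rw [if_neg h', if_neg h, Fin.val_succ]

lemma kpart_refineMinus_eq (t : ℕ) :
    kpart (n + 1) (refineMinus n ν i) t
      = (if (i : ℕ) + 1 < t then 1 else 0)
        + ∑ j : Fin n, if (if (j : ℕ) < (i : ℕ) + 1 then (j : ℕ) else (j : ℕ) + 1) < t
            then Function.update ν i (ν i - 1) j else 0 := by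
  rw [kpart_eq]
  rw [Fin.sum_univ_succAbove _ (⟨(i : ℕ) + 1, Nat.succ_lt_succ i.isLt⟩ : Fin (n + 1))]
  congr 1
  · rw [refineMinus, Fin.insertNth_apply_same]
  · refine Finset.sum_congr rfl fun j _ => ?_
    rw [refineMinus, Fin.insertNth_apply_succAbove, succAbove_val]

lemma kpart_refineMinus_le {t : ℕ} (ht : t ≤ (i : ℕ)) :
    kpart (n + 1) (refineMinus n ν i) t = kpart n ν t := by
  rw [kpart_refineMinus_eq, kpart_eq, if_neg (by omega)]
  rw [zero_add]
  refine Finset.sum_congr rfl fun j _ => ?_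
  by_cases h1 : (j : ℕ) < (i : ℕ) + 1
  · rw [if_pos h1]
    by_cases h2 : (j : ℕ) < t
    · rw [if_pos h2, if_pos h2, Function.update_of_ne (fun he => by
        have := congrArg Fin.val he; omega)]
    · rw [if_neg h2, if_neg h2]
  · rw [if_neg h1, if_neg (by omega), if_neg (by omega)]

lemma kpart_refineMinus_mid (hpos : 0 < ν i) :
    kpart (n + 1) (refineMinus n ν i) ((i : ℕ) + 1) + 1 = kpart n ν ((i : ℕ) + 1) := by
  rw [kpart_refineMinus_eq, kpart_eq, if_neg (by omega), zero_add]
  have key : ∀ j : Fin n,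
      (if (if (j : ℕ) < (i : ℕ) + 1 then (j : ℕ) else (j : ℕ) + 1) < (i : ℕ) + 1
        then Function.update ν i (ν i - 1) j else 0) + (if j = i then 1 else 0)
      = if (j : ℕ) < (i : ℕ) + 1 then ν j else 0 := by
    intro j
    rcases eq_or_ne j i with rfl | hj
    · simp only [Function.update_self, if_pos rfl]
      split_ifs <;> omega
    · have hv : (j : ℕ) ≠ (i : ℕ) := fun he => hj (Fin.ext he)
      simp only [Function.update_of_ne hj, if_neg hj, add_zero]
      split_ifs <;> omega
  calc (∑ j : Fin n, if (if (j : ℕ) < (i : ℕ) + 1 then (j : ℕ) else (j : ℕ) + 1) < (i : ℕ) + 1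
            then Function.update ν i (ν i - 1) j else 0) + 1
      = ∑ j : Fin n, ((if (if (j : ℕ) < (i : ℕ) + 1 then (j : ℕ) else (j : ℕ) + 1) < (i : ℕ) + 1
            then Function.update ν i (ν i - 1) j else 0) + (if j = i then 1 else 0)) := by
        rw [Finset.sum_add_distrib, Finset.sum_ite_eq' Finset.univ i]
        simp
    _ = ∑ j : Fin n, if (j : ℕ) < (i : ℕ) + 1 then ν j else 0 :=
        Finset.sum_congr rfl fun j _ => key j

lemma kpart_refineMinus_ge (hpos : 0 < ν i) {t : ℕ} (ht : (i : ℕ) + 2 ≤ t) :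
    kpart (n + 1) (refineMinus n ν i) t = kpart n ν (t - 1) := by
  rw [kpart_refineMinus_eq, kpart_eq, if_pos (by omega)]
  have key : ∀ j : Fin n,
      (if (if (j : ℕ) < (i : ℕ) + 1 then (j : ℕ) else (j : ℕ) + 1) < t
        then Function.update ν i (ν i - 1) j else 0) + (if j = i then 1 else 0)
      = if (j : ℕ) < t - 1 then ν j else 0 := by
    intro j
    rcases eq_or_ne j i with rfl | hj
    · simp only [Function.update_self, if_pos rfl]
      split_ifs <;> omega
    · have hv : (j : ℕ) ≠ (i : ℕ) := fun he => hj (Fin.ext he)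
      simp only [Function.update_of_ne hj, if_neg hj, add_zero]
      split_ifs <;> omega
  calc 1 + ∑ j : Fin n, (if (if (j : ℕ) < (i : ℕ) + 1 then (j : ℕ) else (j : ℕ) + 1) < t
            then Function.update ν i (ν i - 1) j else 0)
      = ∑ j : Fin n, ((if (if (j : ℕ) < (i : ℕ) + 1 then (j : ℕ) else (j : ℕ) + 1) < t
            then Function.update ν i (ν i - 1) j else 0) + (if j = i then 1 else 0)) := by
        rw [Finset.sum_add_distrib, Finset.sum_ite_eq' Finset.univ i]
        simp [add_comm]
    _ = ∑ j : Fin n, if (j : ℕ) < t - 1 then ν j else 0 :=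
        Finset.sum_congr rfl fun j _ => key j

end RefKpart

section SubKpart
variable (ν : Fin n → ℕ) {i i' : Fin n} (hii' : (i' : ℕ) = (i : ℕ) + 1)

include hii'

lemma subAlpha_apply (j : Fin n) :
    subAlpha n ν i i' j = if j = i' then ν i' + 1 else if j = i then ν i - 1 else ν j := by
  rw [subAlpha]
  rcases eq_or_ne j i' with rfl | hj'
  · rw [Function.update_self, if_pos rfl]
  · rw [Function.update_of_ne hj', if_neg hj']
    rcases eq_or_ne j i with rfl | hj
    · rw [Function.update_self, if_pos rfl]
    · rw [Function.update_of_ne hj, if_neg hj]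

lemma kpart_subAlpha_le {t : ℕ} (ht : t ≤ (i : ℕ)) :
    kpart n (subAlpha n ν i i') t = kpart n ν t := by
  rw [kpart_eq, kpart_eq]
  refine Finset.sum_congr rfl fun j _ => ?_
  by_cases h1 : (j : ℕ) < t
  · rw [if_pos h1, if_pos h1, subAlpha_apply ν hii',
      if_neg (fun he => by have := congrArg Fin.val he; omega : ¬ j = i'),
      if_neg (fun he => by have := congrArg Fin.val he; omega : ¬ j = i)]
  · rw [if_neg h1, if_neg h1]

lemma kpart_subAlpha_mid (hpos : 0 < ν i) :
    kpart n (subAlpha n ν i i') ((i : ℕ) + 1) + 1 = kpart n ν ((i : ℕ) + 1) := by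
  rw [kpart_eq, kpart_eq]
  have key : ∀ j : Fin n,
      (if (j : ℕ) < (i : ℕ) + 1 then subAlpha n ν i i' j else 0) + (if j = i then 1 else 0)
      = if (j : ℕ) < (i : ℕ) + 1 then ν j else 0 := by
    intro j
    rw [subAlpha_apply ν hii']
    rcases eq_or_ne j i with rfl | hj
    · rw [if_neg (fun he => by have := congrArg Fin.val he; omega : ¬ j = i')]
      simp only [eq_self_iff_true, if_true]
      split_ifs <;> omega
    · rcases eq_or_ne j i' with rfl | hj'
      · simp only [eq_self_iff_true, if_true, if_neg hj]
        have hv : (j : ℕ) = (i : ℕ) + 1 := hii'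
        split_ifs <;> omega
      · simp only [if_neg hj, if_neg hj']
        split_ifs <;> omega
  calc (∑ j : Fin n, if (j : ℕ) < (i : ℕ) + 1 then subAlpha n ν i i' j else 0) + 1
      = ∑ j : Fin n, ((if (j : ℕ) < (i : ℕ) + 1 then subAlpha n ν i i' j else 0)
          + (if j = i then 1 else 0)) := by
        rw [Finset.sum_add_distrib, Finset.sum_ite_eq' Finset.univ i]
        simp
    _ = ∑ j : Fin n, if (j : ℕ) < (i : ℕ) + 1 then ν j else 0 :=
        Finset.sum_congr rfl fun j _ => key j

lemma kpart_subAlpha_ge (hpos : 0 < ν i) {t : ℕ} (ht : (i : ℕ) + 2 ≤ t) :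
    kpart n (subAlpha n ν i i') t = kpart n ν t := by
  have key : ∀ j : Fin n,
      (if (j : ℕ) < t then subAlpha n ν i i' j else 0) + (if j = i then 1 else 0)
      = (if (j : ℕ) < t then ν j else 0) + (if j = i' then 1 else 0) := by
    intro j
    rw [subAlpha_apply ν hii']
    rcases eq_or_ne j i with rfl | hj
    · rw [if_neg (fun he => by have := congrArg Fin.val he; omega : ¬ j = i'),
        if_neg (fun he => by have := congrArg Fin.val he; omega : ¬ j = i')]
      simp only [eq_self_iff_true, if_true]
      split_ifs <;> omega
    · rcases eq_or_ne j i' with rfl | hj'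
      · simp only [eq_self_iff_true, if_true, if_neg hj]
        have hv : (j : ℕ) = (i : ℕ) + 1 := hii'
        split_ifs <;> omega
      · simp only [if_neg hj, if_neg hj']
  have hsum := Finset.sum_congr rfl fun j (_ : j ∈ Finset.univ) => key j
  rw [Finset.sum_add_distrib, Finset.sum_add_distrib, Finset.sum_ite_eq' Finset.univ i,
    Finset.sum_ite_eq' Finset.univ i'] at hsum
  simp only [Finset.mem_univ, if_pos] at hsum
  rw [kpart_eq, kpart_eq]
  omega

end SubKpart

lemma mem_blockOf {ν : Fin n → ℕ} {j : Fin n} {a : Fin N} :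
    a ∈ blockOf n N ν j ↔ kpart n ν (j : ℕ) ≤ (a : ℕ) ∧ (a : ℕ) < kpart n ν ((j : ℕ) + 1) := by
  rw [blockOf, Finset.mem_filter]
  simp

lemma blockOf_unique {ν : Fin n → ℕ} {j j' : Fin n} {a : Fin N}
    (h : a ∈ blockOf n N ν j) (h' : a ∈ blockOf n N ν j') : j = j' := by
  rw [mem_blockOf] at h h'
  by_contra hne
  have hv : (j : ℕ) ≠ (j' : ℕ) := fun he => hne (Fin.ext he)
  rcases Nat.lt_or_ge (j : ℕ) (j' : ℕ) with hlt | hge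
  · have := kpart_mono ν (show (j : ℕ) + 1 ≤ (j' : ℕ) from hlt)
    omega
  · have := kpart_mono ν (show (j' : ℕ) + 1 ≤ (j : ℕ) from by omega)
    omega

lemma swap_blockPreserving {ν : Fin n → ℕ} {i₀ : Fin n} {a b : Fin N}
    (ha : a ∈ blockOf n N ν i₀) (hb : b ∈ blockOf n N ν i₀) :
    BlockPreserving n N ν (Equiv.swap a b) := by
  intro j c hc
  rcases eq_or_ne c a with rfl | hca
  · rw [Equiv.swap_apply_left, blockOf_unique hc ha]
    exact hb
  · rcases eq_or_ne c b with rfl | hcb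
    · rw [Equiv.swap_apply_right, blockOf_unique hc hb]
      exact ha
    · rwa [Equiv.swap_apply_of_ne_of_ne hca hcb]

lemma mul_blockPreserving {ν : Fin n → ℕ} {σ τ : Equiv.Perm (Fin N)}
    (hσ : BlockPreserving n N ν σ) (hτ : BlockPreserving n N ν τ) :
    BlockPreserving n N ν (σ * τ) := by
  intro j a ha
  rw [Equiv.Perm.mul_apply]
  exact hσ j _ (hτ j a ha)

lemma blockOf_card {ν : Fin n → ℕ} (j : Fin n) (hle : kpart n ν ((j : ℕ) + 1) ≤ N) :
    (blockOf n N ν j).card = ν j := by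
  have h1 : (blockOf n N ν j).image Fin.val
      = Finset.Ico (kpart n ν (j : ℕ)) (kpart n ν ((j : ℕ) + 1)) := by
    ext m
    simp only [Finset.mem_image, Finset.mem_Ico]
    constructor
    · rintro ⟨a, ha, rfl⟩
      exact mem_blockOf.mp ha
    · intro hm
      exact ⟨⟨m, lt_of_lt_of_le hm.2 hle⟩, mem_blockOf.mpr hm, rfl⟩
  have h2 := Finset.card_image_of_injective (blockOf n N ν j) Fin.val_injective
  rw [h1, Nat.card_Ico] at h2
  have h3 := kpart_succ ν j.isLt
  rw [Fin.eta] at h3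
  omega

lemma mem_Psub {ν : Fin n → ℕ} {p : MvPolynomial (Fin N) ℂ} :
    p ∈ Psub n N ν ↔ ∀ σ : Equiv.Perm (Fin N), BlockPreserving n N ν σ → rename (⇑σ) p = p :=
  Iff.rfl

end PRF

/-- **`P_{ν−α_i,ν}` is a free module over `P_ν` with basis `{X_{k_i}^m : 0 ≤ m ≤ ν_i − 1}`
and a free module over `P_{ν−α_i}` with basis `{X_{k_i}^m : 0 ≤ m ≤ ν_{i+1}}`**:
in each case the family of powers is linearly independent over the respective subring and
its span over that subring is all of `P_{ν−α_i,ν}`. -/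
theorem P_refined_free [NeZero N] (hn : 2 ≤ n) (hN : 1 ≤ N)
    (ν : Fin n → ℕ) (hν : (∑ a, ν a) = N)
    (i : Fin n) (hi : (i : ℕ) + 1 < n) (hpos : 0 < ν i) :
    (LinearIndependent (Psub n N ν)
        (fun m : Fin (ν i) => (X (varF n N ν i) : MvPolynomial (Fin N) ℂ) ^ (m : ℕ)) ∧
      (Submodule.span (Psub n N ν)
          (Set.range fun m : Fin (ν i) =>
            (X (varF n N ν i) : MvPolynomial (Fin N) ℂ) ^ (m : ℕ)) : Set (MvPolynomial (Fin N) ℂ)) =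
        (Psub (n + 1) N (refineMinus n ν i) : Set (MvPolynomial (Fin N) ℂ))) ∧
    (LinearIndependent (Psub n N (subAlpha n ν i ⟨(i : ℕ) + 1, hi⟩))
        (fun m : Fin (ν ⟨(i : ℕ) + 1, hi⟩ + 1) =>
          (X (varF n N ν i) : MvPolynomial (Fin N) ℂ) ^ (m : ℕ)) ∧
      (Submodule.span (Psub n N (subAlpha n ν i ⟨(i : ℕ) + 1, hi⟩))
          (Set.range fun m : Fin (ν ⟨(i : ℕ) + 1, hi⟩ + 1) =>
            (X (varF n N ν i) : MvPolynomial (Fin N) ℂ) ^ (m : ℕ)) : Set (MvPolynomial (Fin N) ℂ)) =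
        (Psub (n + 1) N (refineMinus n ν i) : Set (MvPolynomial (Fin N) ℂ))) := by
  classical
  set i' : Fin n := ⟨(i : ℕ) + 1, hi⟩ with hi'def
  have hii' : (i' : ℕ) = (i : ℕ) + 1 := rfl
  have hKN : kpart n ν n = N := by rw [PRF.kpart_total ν (le_refl n), hν]
  have hK2N : kpart n ν ((i : ℕ) + 2) ≤ N := by
    rw [← hKN]; exact PRF.kpart_mono ν (by omega)
  have hK1N : kpart n ν ((i : ℕ) + 1) ≤ N := by
    rw [← hKN]; exact PRF.kpart_mono ν (by omega)
  have hKi1 : kpart n ν ((i : ℕ) + 1) = kpart n ν (i : ℕ) + ν i := by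
    have := PRF.kpart_succ ν i.isLt
    rwa [Fin.eta] at this
  have hKi2 : kpart n ν ((i : ℕ) + 2) = kpart n ν ((i : ℕ) + 1) + ν i' := PRF.kpart_succ ν hi
  have hK1pos : 1 ≤ kpart n ν ((i : ℕ) + 1) := by omega
  have hxval : ((varF n N ν i : Fin N) : ℕ) = kpart n ν ((i : ℕ) + 1) - 1 := by
    rw [varF, Fin.val_cast_of_lt (n := N) (by omega)]
  have hRle : ∀ t, t ≤ (i : ℕ) → kpart (n + 1) (refineMinus n ν i) t = kpart n ν t :=
    fun t ht => PRF.kpart_refineMinus_le ν i ht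
  have hRmid : kpart (n + 1) (refineMinus n ν i) ((i : ℕ) + 1) = kpart n ν ((i : ℕ) + 1) - 1 := by
    have := PRF.kpart_refineMinus_mid ν i hpos
    omega
  have hRge : ∀ t, (i : ℕ) + 2 ≤ t → kpart (n + 1) (refineMinus n ν i) t = kpart n ν (t - 1) :=
    fun t ht => PRF.kpart_refineMinus_ge ν i hpos ht
  have hSle : ∀ t, t ≤ (i : ℕ) → kpart n (subAlpha n ν i i') t = kpart n ν t :=
    fun t ht => PRF.kpart_subAlpha_le ν hii' ht
  have hSmid : kpart n (subAlpha n ν i i') ((i : ℕ) + 1) = kpart n ν ((i : ℕ) + 1) - 1 := by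
    have := PRF.kpart_subAlpha_mid ν hii' hpos
    omega
  have hSge : ∀ t, (i : ℕ) + 2 ≤ t → kpart n (subAlpha n ν i i') t = kpart n ν t :=
    fun t ht => PRF.kpart_subAlpha_ge ν hii' hpos ht
  -- x = varF fixed by refined block-preserving permutations
  have hxblockref : varF n N ν i ∈ blockOf (n + 1) N (refineMinus n ν i) ⟨(i : ℕ) + 1, by omega⟩ := by
    rw [PRF.mem_blockOf, hRmid, hRge ((i : ℕ) + 2) (le_refl _),
      show (i : ℕ) + 2 - 1 = (i : ℕ) + 1 from rfl]
    omega
  have h2c : ∀ σ, BlockPreserving (n + 1) N (refineMinus n ν i) σ → σ (varF n N ν i) = varF n N ν i := by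
    intro σ hσ
    have := hσ _ _ hxblockref
    rw [PRF.mem_blockOf, hRmid, hRge ((i : ℕ) + 2) (le_refl _),
      show (i : ℕ) + 2 - 1 = (i : ℕ) + 1 from rfl] at this
    exact Fin.val_injective (by omega)
  -- refined block-preserving implies ν block-preserving
  have h1c : ∀ σ, BlockPreserving (n + 1) N (refineMinus n ν i) σ → BlockPreserving n N ν σ := by
    intro σ hσ j a ha
    rw [PRF.mem_blockOf] at ha ⊢
    rcases Nat.lt_trichotomy (j : ℕ) (i : ℕ) with hj | hj | hj
    · have hja : a ∈ blockOf (n + 1) N (refineMinus n ν i) ⟨(j : ℕ), by omega⟩ := by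
        rw [PRF.mem_blockOf, hRle (j : ℕ) (by omega), hRle ((j : ℕ) + 1) (by omega)]
        exact ha
      have hres := hσ _ _ hja
      rw [PRF.mem_blockOf, hRle (j : ℕ) (by omega), hRle ((j : ℕ) + 1) (by omega)] at hres
      exact hres
    · rw [hj] at ha ⊢
      by_cases hsplit : (a : ℕ) < kpart n ν ((i : ℕ) + 1) - 1
      · have hja : a ∈ blockOf (n + 1) N (refineMinus n ν i) ⟨(i : ℕ), by omega⟩ := by
          rw [PRF.mem_blockOf, hRle (i : ℕ) (le_refl _), hRmid]
          omega
        have hres := hσ _ _ hja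
        rw [PRF.mem_blockOf, hRle (i : ℕ) (le_refl _), hRmid] at hres
        omega
      · have hja : a ∈ blockOf (n + 1) N (refineMinus n ν i) ⟨(i : ℕ) + 1, by omega⟩ := by
          rw [PRF.mem_blockOf, hRmid, hRge ((i : ℕ) + 2) (le_refl _),
            show (i : ℕ) + 2 - 1 = (i : ℕ) + 1 from rfl]
          omega
        have hres := hσ _ _ hja
        rw [PRF.mem_blockOf, hRmid, hRge ((i : ℕ) + 2) (le_refl _),
          show (i : ℕ) + 2 - 1 = (i : ℕ) + 1 from rfl] at hres
        omega
    · have hja : a ∈ blockOf (n + 1) N (refineMinus n ν i) ⟨(j : ℕ) + 1, by omega⟩ := by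
        rw [PRF.mem_blockOf, hRge ((j : ℕ) + 1) (by omega), hRge ((j : ℕ) + 2) (by omega),
          show (j : ℕ) + 1 - 1 = (j : ℕ) from rfl, show (j : ℕ) + 2 - 1 = (j : ℕ) + 1 from rfl]
        exact ha
      have hres := hσ _ _ hja
      rw [PRF.mem_blockOf, hRge ((j : ℕ) + 1) (by omega), hRge ((j : ℕ) + 2) (by omega),
        show (j : ℕ) + 1 - 1 = (j : ℕ) from rfl, show (j : ℕ) + 2 - 1 = (j : ℕ) + 1 from rfl] at hres
      exact hres
  -- ν block-preserving + fixing x implies refined block-preserving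
  have h5c : ∀ σ, BlockPreserving n N ν σ → σ (varF n N ν i) = varF n N ν i →
      BlockPreserving (n + 1) N (refineMinus n ν i) σ := by
    intro σ hσ hfix j' a ha
    rw [PRF.mem_blockOf] at ha ⊢
    rcases Nat.lt_trichotomy (j' : ℕ) (i : ℕ) with hj | hj | hj
    · rw [hRle (j' : ℕ) (by omega), hRle ((j' : ℕ) + 1) (by omega)] at ha ⊢
      have hres := hσ ⟨(j' : ℕ), by omega⟩ a (by rw [PRF.mem_blockOf]; exact ha)
      rw [PRF.mem_blockOf] at hres
      exact hres
    · rw [hj] at ha ⊢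
      rw [hRle (i : ℕ) (le_refl _), hRmid] at ha ⊢
      have hane : a ≠ varF n N ν i := by
        intro he
        rw [he, hxval] at ha
        omega
      have hres := hσ i a (by rw [PRF.mem_blockOf]; omega)
      rw [PRF.mem_blockOf] at hres
      have hσane : σ a ≠ varF n N ν i := fun he => hane (σ.injective (by rw [he, hfix]))
      have hvne : ((σ a : Fin N) : ℕ) ≠ kpart n ν ((i : ℕ) + 1) - 1 := fun he =>
        hσane (Fin.val_injective (by rw [he, hxval]))
      omega
    · rcases Nat.lt_or_ge ((i : ℕ) + 1) (j' : ℕ) with hj2 | hj2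
      · rw [hRge (j' : ℕ) (by omega), hRge ((j' : ℕ) + 1) (by omega),
          show (j' : ℕ) + 1 - 1 = (j' : ℕ) from rfl] at ha ⊢
        have hres := hσ ⟨(j' : ℕ) - 1, by omega⟩ a (by
          rw [PRF.mem_blockOf, show (j' : ℕ) - 1 + 1 = (j' : ℕ) from by omega]
          exact ha)
        rw [PRF.mem_blockOf, show (j' : ℕ) - 1 + 1 = (j' : ℕ) from by omega] at hres
        exact hres
      · have hj3 : (j' : ℕ) = (i : ℕ) + 1 := by omega
        rw [hj3, hRmid, hRge ((i : ℕ) + 2) (le_refl _),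
          show (i : ℕ) + 2 - 1 = (i : ℕ) + 1 from rfl] at ha ⊢
        have hax : a = varF n N ν i := Fin.val_injective (by rw [hxval]; omega)
        rw [hax, hfix, hxval]
        omega
  have hx1 : varF n N ν i ∈ blockOf n N ν i := by
    rw [PRF.mem_blockOf]
    omega
  have hcard1 : (blockOf n N ν i).card = ν i := PRF.blockOf_card i hK1N
  -- case 2 : data for subAlpha
  have hx2 : varF n N ν i ∈ blockOf n N (subAlpha n ν i i') i' := by
    rw [PRF.mem_blockOf, hii', hSmid, show (i : ℕ) + 1 + 1 = (i : ℕ) + 2 from rfl,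
      hSge ((i : ℕ) + 2) (le_refl _)]
    omega
  have hcard2 : (blockOf n N (subAlpha n ν i i') i').card = ν i' + 1 := by
    have hle2 : kpart n (subAlpha n ν i i') ((i' : ℕ) + 1) ≤ N := by
      rw [hii', show (i : ℕ) + 1 + 1 = (i : ℕ) + 2 from rfl, hSge ((i : ℕ) + 2) (le_refl _)]
      exact hK2N
    have := PRF.blockOf_card i' hle2
    rw [this, PRF.subAlpha_apply ν hii', if_pos rfl]
  have h1c2 : ∀ σ, BlockPreserving (n + 1) N (refineMinus n ν i) σ →
      BlockPreserving n N (subAlpha n ν i i') σ := by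
    intro σ hσ j a ha
    rw [PRF.mem_blockOf] at ha ⊢
    rcases Nat.lt_trichotomy (j : ℕ) (i : ℕ) with hj | hj | hj
    · rw [hSle (j : ℕ) (by omega), hSle ((j : ℕ) + 1) (by omega)] at ha ⊢
      have hja : a ∈ blockOf (n + 1) N (refineMinus n ν i) ⟨(j : ℕ), by omega⟩ := by
        rw [PRF.mem_blockOf, hRle (j : ℕ) (by omega), hRle ((j : ℕ) + 1) (by omega)]
        exact ha
      have hres := hσ _ _ hja
      rw [PRF.mem_blockOf, hRle (j : ℕ) (by omega), hRle ((j : ℕ) + 1) (by omega)] at hres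
      exact hres
    · rw [hj] at ha ⊢
      rw [hSle (i : ℕ) (le_refl _), hSmid] at ha ⊢
      have hja : a ∈ blockOf (n + 1) N (refineMinus n ν i) ⟨(i : ℕ), by omega⟩ := by
        rw [PRF.mem_blockOf, hRle (i : ℕ) (le_refl _), hRmid]
        exact ha
      have hres := hσ _ _ hja
      rw [PRF.mem_blockOf, hRle (i : ℕ) (le_refl _), hRmid] at hres
      exact hres
    · rcases Nat.lt_or_ge ((i : ℕ) + 1) (j : ℕ) with hj2 | hj2
      · rw [hSge (j : ℕ) (by omega), hSge ((j : ℕ) + 1) (by omega)] at ha ⊢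
        have hja : a ∈ blockOf (n + 1) N (refineMinus n ν i) ⟨(j : ℕ) + 1, by omega⟩ := by
          rw [PRF.mem_blockOf, hRge ((j : ℕ) + 1) (by omega), hRge ((j : ℕ) + 2) (by omega),
            show (j : ℕ) + 1 - 1 = (j : ℕ) from rfl, show (j : ℕ) + 2 - 1 = (j : ℕ) + 1 from rfl]
          exact ha
        have hres := hσ _ _ hja
        rw [PRF.mem_blockOf, hRge ((j : ℕ) + 1) (by omega), hRge ((j : ℕ) + 2) (by omega),
          show (j : ℕ) + 1 - 1 = (j : ℕ) from rfl, show (j : ℕ) + 2 - 1 = (j : ℕ) + 1 from rfl] at hres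
        exact hres
      · have hj3 : (j : ℕ) = (i : ℕ) + 1 := by omega
        rw [hj3] at ha ⊢
        rw [hSmid, show (i : ℕ) + 1 + 1 = (i : ℕ) + 2 from rfl,
          hSge ((i : ℕ) + 2) (le_refl _)] at ha ⊢
        by_cases hsplit : (a : ℕ) < kpart n ν ((i : ℕ) + 1)
        · have hja : a ∈ blockOf (n + 1) N (refineMinus n ν i) ⟨(i : ℕ) + 1, by omega⟩ := by
            rw [PRF.mem_blockOf, hRmid, hRge ((i : ℕ) + 2) (le_refl _),
              show (i : ℕ) + 2 - 1 = (i : ℕ) + 1 from rfl]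
            omega
          have hres := hσ _ _ hja
          rw [PRF.mem_blockOf, hRmid, hRge ((i : ℕ) + 2) (le_refl _),
            show (i : ℕ) + 2 - 1 = (i : ℕ) + 1 from rfl] at hres
          omega
        · have hja : a ∈ blockOf (n + 1) N (refineMinus n ν i) ⟨(i : ℕ) + 2, by omega⟩ := by
            rw [PRF.mem_blockOf, hRge ((i : ℕ) + 2) (le_refl _), hRge ((i : ℕ) + 3) (by omega),
              show (i : ℕ) + 2 - 1 = (i : ℕ) + 1 from rfl,
              show (i : ℕ) + 3 - 1 = (i : ℕ) + 2 from rfl]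
            omega
          have hres := hσ _ _ hja
          rw [PRF.mem_blockOf, hRge ((i : ℕ) + 2) (le_refl _), hRge ((i : ℕ) + 3) (by omega),
            show (i : ℕ) + 2 - 1 = (i : ℕ) + 1 from rfl,
            show (i : ℕ) + 3 - 1 = (i : ℕ) + 2 from rfl] at hres
          omega
  have h5c2 : ∀ σ, BlockPreserving n N (subAlpha n ν i i') σ →
      σ (varF n N ν i) = varF n N ν i → BlockPreserving (n + 1) N (refineMinus n ν i) σ := by
    intro σ hσ hfix j' a ha
    rw [PRF.mem_blockOf] at ha ⊢
    rcases Nat.lt_trichotomy (j' : ℕ) (i : ℕ) with hj | hj | hj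
    · rw [hRle (j' : ℕ) (by omega), hRle ((j' : ℕ) + 1) (by omega)] at ha ⊢
      have hres := hσ ⟨(j' : ℕ), by omega⟩ a (by
        rw [PRF.mem_blockOf, hSle (j' : ℕ) (by omega), hSle ((j' : ℕ) + 1) (by omega)]
        exact ha)
      rw [PRF.mem_blockOf, hSle (j' : ℕ) (by omega), hSle ((j' : ℕ) + 1) (by omega)] at hres
      exact hres
    · rw [hj] at ha ⊢
      rw [hRle (i : ℕ) (le_refl _), hRmid] at ha ⊢
      have hres := hσ ⟨(i : ℕ), by omega⟩ a (by
        rw [PRF.mem_blockOf, hSle (i : ℕ) (le_refl _), hSmid]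
        exact ha)
      rw [PRF.mem_blockOf, hSle (i : ℕ) (le_refl _), hSmid] at hres
      exact hres
    · rcases Nat.lt_or_ge ((i : ℕ) + 2) (j' : ℕ) with hj2 | hj2
      · -- j' ≥ i+3
        rw [hRge (j' : ℕ) (by omega), hRge ((j' : ℕ) + 1) (by omega),
          show (j' : ℕ) + 1 - 1 = (j' : ℕ) from rfl] at ha ⊢
        have hres := hσ ⟨(j' : ℕ) - 1, by omega⟩ a (by
          rw [PRF.mem_blockOf, hSge ((j' : ℕ) - 1) (by omega),
            show (j' : ℕ) - 1 + 1 = (j' : ℕ) from by omega, hSge (j' : ℕ) (by omega)]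
          exact ha)
        rw [PRF.mem_blockOf, hSge ((j' : ℕ) - 1) (by omega),
          show (j' : ℕ) - 1 + 1 = (j' : ℕ) from by omega, hSge (j' : ℕ) (by omega)] at hres
        exact hres
      · rcases Nat.lt_or_ge ((i : ℕ) + 1) (j' : ℕ) with hj4 | hj4
        · -- j' = i+2
          have hj3 : (j' : ℕ) = (i : ℕ) + 2 := by omega
          rw [hj3, hRge ((i : ℕ) + 2) (le_refl _), hRge ((i : ℕ) + 3) (by omega),
            show (i : ℕ) + 2 - 1 = (i : ℕ) + 1 from rfl,
            show (i : ℕ) + 3 - 1 = (i : ℕ) + 2 from rfl] at ha ⊢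
          have hane : a ≠ varF n N ν i := by
            intro he
            rw [he, hxval] at ha
            omega
          have hres := hσ i' a (by
            rw [PRF.mem_blockOf, hii', hSmid, show (i : ℕ) + 1 + 1 = (i : ℕ) + 2 from rfl,
              hSge ((i : ℕ) + 2) (le_refl _)]
            omega)
          rw [PRF.mem_blockOf, hii', hSmid, show (i : ℕ) + 1 + 1 = (i : ℕ) + 2 from rfl,
            hSge ((i : ℕ) + 2) (le_refl _)] at hres
          have hσane : σ a ≠ varF n N ν i := fun he => hane (σ.injective (by rw [he, hfix]))
          have hvne : ((σ a : Fin N) : ℕ) ≠ kpart n ν ((i : ℕ) + 1) - 1 := fun he =>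
            hσane (Fin.val_injective (by rw [he, hxval]))
          omega
        · -- j' = i+1 : singleton x
          have hj3 : (j' : ℕ) = (i : ℕ) + 1 := by omega
          rw [hj3, hRmid, hRge ((i : ℕ) + 2) (le_refl _),
            show (i : ℕ) + 2 - 1 = (i : ℕ) + 1 from rfl] at ha ⊢
          have hax : a = varF n N ν i := Fin.val_injective (by rw [hxval]; omega)
          rw [hax, hfix, hxval]
          omega
  constructor
  · exact ⟨PRF.abstract_li (varF n N ν i) (blockOf n N ν i) (BlockPreserving n N ν)
      (Psub n N ν) hx1 hcard1 (fun p => Iff.rfl)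
      (fun a ha b hb => PRF.swap_blockPreserving ha hb),
    PRF.abstract_span (varF n N ν i) (blockOf n N ν i) (BlockPreserving n N ν)
      (BlockPreserving (n + 1) N (refineMinus n ν i)) (Psub (n + 1) N (refineMinus n ν i))
      (Psub n N ν) hx1 hcard1 (fun p => Iff.rfl) (fun p => Iff.rfl) h1c h2c
      (fun a ha b hb => PRF.swap_blockPreserving ha hb)
      (fun σ hσ a ha => hσ i a ha) h5c
      (fun σ τ hσ hτ => PRF.mul_blockPreserving hσ hτ)⟩
  · exact ⟨PRF.abstract_li (varF n N ν i) (blockOf n N (subAlpha n ν i i') i')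
      (BlockPreserving n N (subAlpha n ν i i')) (Psub n N (subAlpha n ν i i'))
      hx2 hcard2 (fun p => Iff.rfl)
      (fun a ha b hb => PRF.swap_blockPreserving ha hb),
    PRF.abstract_span (varF n N ν i) (blockOf n N (subAlpha n ν i i') i')
      (BlockPreserving n N (subAlpha n ν i i'))
      (BlockPreserving (n + 1) N (refineMinus n ν i)) (Psub (n + 1) N (refineMinus n ν i))
      (Psub n N (subAlpha n ν i i')) hx2 hcard2 (fun p => Iff.rfl) (fun p => Iff.rfl)
      h1c2 h2c (fun a ha b hb => PRF.swap_blockPreserving ha hb)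
      (fun σ hσ a ha => hσ i' a ha) h5c2
      (fun σ τ hσ hτ => PRF.mul_blockPreserving hσ hτ)⟩


end
end
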